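/- Let K ≥ 2 be an even integer, U ∈ ℂ^{B^K}, V ∈ ℝ^{B^K}, and let t ≥ 0 satisfy t·δx·max_{k∈B^K}|(V_{k+1} − V_k)/δx| ≤ π. Then ‖(e^{itV_k}U_k)_{k∈B^K}‖_{h¹} ≥ (2/π)·t·‖(((V_{k+1} − V_k)/δx)·U_k)_{k∈B^K}‖_{ℓ²} − ‖U‖_{h¹}. -/

import Mathlib

/-- The index set `B^K = {−K/2, …, K/2−1}` (for `K` even). -/
noncomputable def BK (K : ℕ) : Finset ℤ := Finset.Icc (-((K : ℤ) / 2)) ((K : ℤ) / 2 - 1)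

/-- The discrete Fourier transform `(F_K U)_j = (1/K) Σ_{k∈B^K} e^{−2πijk/K} U_k`. -/
noncomputable def dft (K : ℕ) (U : ℤ → ℂ) (j : ℤ) : ℂ :=
  (1 / (K : ℂ)) * ∑ k ∈ BK K,
    Complex.exp (-(2 * (Real.pi : ℂ) * Complex.I * (j : ℂ) * (k : ℂ)) / (K : ℂ)) * U k

/-- The inverse discrete Fourier transform `(F_K⁻¹ W)_k = Σ_{j∈B^K} e^{2πijk/K} W_j`. -/
noncomputable def idft (K : ℕ) (W : ℤ → ℂ) (k : ℤ) : ℂ :=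
  ∑ j ∈ BK K,
    Complex.exp ((2 * (Real.pi : ℂ) * Complex.I * (j : ℂ) * (k : ℂ)) / (K : ℂ)) * W j

/-- The discrete `ℓ²` norm: `‖U‖_{ℓ²}² = (2π/K) Σ_{k∈B^K} |U_k|²`. -/
noncomputable def l2normK (K : ℕ) (U : ℤ → ℂ) : ℝ :=
  Real.sqrt ((2 * Real.pi / K) * ∑ k ∈ BK K, ‖U k‖ ^ 2)

/-- The discrete `h¹` norm: `‖U‖_{h¹}² = (2π/K) Σ_{k∈B^K} |(U_{k+1}−U_k)/δx|²`
with `δx = 2π/K`. -/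
noncomputable def h1normK (K : ℕ) (U : ℤ → ℂ) : ℝ :=
  Real.sqrt ((2 * Real.pi / K) *
    ∑ k ∈ BK K, ‖(U (k + 1) - U k) / ((2 * Real.pi / K : ℝ) : ℂ)‖ ^ 2)

/-- The discrete kinetic energy `T^K(W) = (1/K) Σ_{j∈B^K} j²|W_j|²`. -/
noncomputable def tK (K : ℕ) (W : ℤ → ℂ) : ℝ :=
  (1 / (K : ℝ)) * ∑ j ∈ BK K, (j : ℝ) ^ 2 * ‖W j‖ ^ 2

/-- The discrete free Schrödinger flow `e^{itΔ^K}U = F_K⁻¹(j ↦ e^{−itj²}(F_K U)_j)`. -/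
noncomputable def freeFlowK (K : ℕ) (t : ℝ) (U : ℤ → ℂ) : ℤ → ℂ :=
  idft K (fun j => Complex.exp (-(Complex.I * (t : ℂ)) * (j : ℂ) ^ 2) * dft K U j)

lemma key_mink {ι : Type*} (s : Finset ι) (a b c : ι → ℝ) (d : ℝ) (hd : 0 ≤ d)
    (h : ∀ i ∈ s, a i ≤ b i + c i) (ha : ∀ i ∈ s, 0 ≤ a i) :
    Real.sqrt (d * ∑ i ∈ s, a i ^ 2) ≤
      Real.sqrt (d * ∑ i ∈ s, b i ^ 2) + Real.sqrt (d * ∑ i ∈ s, c i ^ 2) := by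
  rw [Real.sqrt_mul hd, Real.sqrt_mul hd, Real.sqrt_mul hd, ← mul_add]
  refine mul_le_mul_of_nonneg_left ?_ (Real.sqrt_nonneg d)
  have h1 : Real.sqrt (∑ i ∈ s, a i ^ 2) ≤ Real.sqrt (∑ i ∈ s, (b i + c i) ^ 2) := by
    apply Real.sqrt_le_sqrt
    exact Finset.sum_le_sum fun i hi => pow_le_pow_left₀ (ha i hi) (h i hi) 2
  refine h1.trans ?_
  set B := Real.sqrt (∑ i ∈ s, b i ^ 2)
  set C := Real.sqrt (∑ i ∈ s, c i ^ 2)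
  have hB : 0 ≤ B := Real.sqrt_nonneg _
  have hC : 0 ≤ C := Real.sqrt_nonneg _
  have hcs : ∑ i ∈ s, b i * c i ≤ B * C := Real.sum_mul_le_sqrt_mul_sqrt s b c
  have hsum : ∑ i ∈ s, (b i + c i) ^ 2 ≤ (B + C) ^ 2 := by
    have hb2 : ∑ i ∈ s, b i ^ 2 = B ^ 2 := (Real.sq_sqrt (Finset.sum_nonneg fun i _ => sq_nonneg _)).symm
    have hc2 : ∑ i ∈ s, c i ^ 2 = C ^ 2 := (Real.sq_sqrt (Finset.sum_nonneg fun i _ => sq_nonneg _)).symm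
    calc ∑ i ∈ s, (b i + c i) ^ 2
        = (∑ i ∈ s, b i ^ 2) + 2 * (∑ i ∈ s, b i * c i) + ∑ i ∈ s, c i ^ 2 := by
          rw [Finset.mul_sum, ← Finset.sum_add_distrib, ← Finset.sum_add_distrib]
          exact Finset.sum_congr rfl fun i _ => by ring
      _ ≤ B ^ 2 + 2 * (B * C) + C ^ 2 := by rw [hb2, hc2]; gcongr
      _ = (B + C) ^ 2 := by ring
  calc Real.sqrt (∑ i ∈ s, (b i + c i) ^ 2) ≤ Real.sqrt ((B + C) ^ 2) := Real.sqrt_le_sqrt hsum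
    _ = B + C := Real.sqrt_sq (by linarith)

lemma exp_I_sub_one_ge {θ : ℝ} (hθ : |θ| ≤ Real.pi) :
    2 / Real.pi * |θ| ≤ ‖Complex.exp (θ * Complex.I) - 1‖ := by
  have habs : ‖Complex.exp (θ * Complex.I) - 1‖ = 2 * |Real.sin (θ / 2)| := by
    rw [Complex.norm_def, Complex.normSq_apply]
    simp only [Complex.sub_re, Complex.sub_im, Complex.exp_ofReal_mul_I_re,
      Complex.exp_ofReal_mul_I_im, Complex.one_re, Complex.one_im, sub_zero]
    rw [Real.abs_sin_half]
    rw [show (Real.cos θ - 1) * (Real.cos θ - 1) + Real.sin θ * Real.sin θ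
        = 4 * ((1 - Real.cos θ) / 2) by
      have := Real.sin_sq_add_cos_sq θ; nlinarith]
    rw [show (4 : ℝ) = 2 ^ 2 by norm_num, Real.sqrt_mul (by positivity), Real.sqrt_sq (by norm_num)]
  rw [habs]
  have h1 : 2 / Real.pi * (|θ| / 2) ≤ Real.sin (|θ| / 2) := by
    apply Real.mul_le_sin (by positivity)
    linarith [abs_nonneg θ]
  have h2 : Real.sin (|θ| / 2) ≤ |Real.sin (θ / 2)| := by
    rcases abs_cases θ with ⟨h, _⟩ | ⟨h, _⟩
    · rw [h]; exact le_abs_self _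
    · rw [h, show -θ / 2 = -(θ / 2) by ring, Real.sin_neg]
      exact neg_le_abs _
  calc 2 / Real.pi * |θ| = 2 * (2 / Real.pi * (|θ| / 2)) := by ring
    _ ≤ 2 * |Real.sin (θ / 2)| := by linarith

lemma pull_const {ι : Type*} (s : Finset ι) (f : ι → ℝ) (c d : ℝ) (hc : 0 ≤ c) :
    c * Real.sqrt (d * ∑ i ∈ s, f i ^ 2) = Real.sqrt (d * ∑ i ∈ s, (c * f i) ^ 2) := by
  have : ∑ i ∈ s, (c * f i) ^ 2 = c ^ 2 * ∑ i ∈ s, f i ^ 2 := by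
    rw [Finset.mul_sum]; exact Finset.sum_congr rfl fun i _ => by ring
  rw [this, show d * (c ^ 2 * ∑ i ∈ s, f i ^ 2) = c ^ 2 * (d * ∑ i ∈ s, f i ^ 2) by ring,
    Real.sqrt_mul (sq_nonneg c), Real.sqrt_sq hc]


/-- Let `U ∈ ℂ^{B^K}`, `V ∈ ℝ^{B^K}` (periodically indexed), and let
`t ≥ 0` satisfy `t·δx·max_k |(V_{k+1}−V_k)/δx| ≤ π` (stated for every `k ∈ B^K`). Then
`‖(e^{itV_k}U_k)_k‖_{h¹} ≥ (2/π)·t·‖(((V_{k+1}−V_k)/δx)·U_k)_k‖_{ℓ²} − ‖U‖_{h¹}`. -/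
theorem stmt13 (K : ℕ) (hK : 2 ≤ K) (hKe : Even K)
    (U : ℤ → ℂ) (hU : ∀ j : ℤ, U (j + K) = U j)
    (V : ℤ → ℝ) (hV : ∀ j : ℤ, V (j + K) = V j)
    (t : ℝ) (ht0 : 0 ≤ t)
    (ht : ∀ k ∈ BK K,
      t * (2 * Real.pi / K) * |(V (k + 1) - V k) / (2 * Real.pi / K)| ≤ Real.pi) :
    h1normK K (fun k => Complex.exp (Complex.I * (t : ℂ) * ((V k : ℝ) : ℂ)) * U k) ≥
      (2 / Real.pi) * t *
        l2normK K (fun k => (((V (k + 1) - V k) / (2 * Real.pi / K) : ℝ) : ℂ) * U k) -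
      h1normK K U := by
  have hπ := Real.pi_pos
  have hK0 : (0 : ℝ) < K := by
    have : (2 : ℝ) ≤ K := by exact_mod_cast hK
    linarith
  set δ : ℝ := 2 * Real.pi / K with hδdef
  have hδ : 0 < δ := by positivity
  set W : ℤ → ℂ := fun k => Complex.exp (Complex.I * (t : ℂ) * ((V k : ℝ) : ℂ)) * U k with hWdef
  rw [ge_iff_le, sub_le_iff_le_add, h1normK, h1normK, l2normK]
  rw [pull_const (BK K) _ (2 / Real.pi * t) δ (by positivity)]
  apply key_mink
  · exact hδ.le
  · intro k hk
    -- pointwise inequality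
    have hθ : |t * (V (k + 1) - V k)| ≤ Real.pi := by
      have h1 := ht k hk
      have habs : |(V (k + 1) - V k) / δ| = |V (k + 1) - V k| / δ := by
        rw [abs_div, abs_of_pos hδ]
      rw [habs] at h1
      rw [abs_mul, abs_of_nonneg ht0]
      calc t * |V (k + 1) - V k| = t * δ * (|V (k + 1) - V k| / δ) := by
            field_simp
        _ ≤ Real.pi := h1
    set θ : ℝ := t * (V (k + 1) - V k) with hθdef
    have hexp : 2 / Real.pi * |θ| ≤ ‖Complex.exp (θ * Complex.I) - 1‖ :=
      exp_I_sub_one_ge hθ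
    -- algebraic identity
    have hid : (Complex.exp ((θ : ℂ) * Complex.I) - 1) * W k
        = (W (k + 1) - W k) - Complex.exp (Complex.I * (t : ℂ) * ((V (k + 1) : ℝ) : ℂ))
            * (U (k + 1) - U k) := by
      have he : Complex.exp ((θ : ℂ) * Complex.I) * Complex.exp (Complex.I * (t : ℂ) * ((V k : ℝ) : ℂ))
          = Complex.exp (Complex.I * (t : ℂ) * ((V (k + 1) : ℝ) : ℂ)) := by
        rw [← Complex.exp_add]
        congr 1
        push_cast [hθdef]
        ring
      simp only [hWdef]
      rw [← he]
      ring
    have habsW : ‖Complex.exp (Complex.I * (t : ℂ) * ((V (k + 1) : ℝ) : ℂ))‖ = 1 := by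
      rw [Complex.norm_exp]
      simp
    have hstep : ‖Complex.exp ((θ : ℂ) * Complex.I) - 1‖ * ‖U k‖
        ≤ ‖W (k + 1) - W k‖ + ‖U (k + 1) - U k‖ := by
      have h1 : ‖Complex.exp ((θ : ℂ) * Complex.I) - 1‖ * ‖U k‖
          ≤ ‖(Complex.exp ((θ : ℂ) * Complex.I) - 1) * W k‖ := by
        rw [norm_mul]
        simp only [hWdef]
        rw [norm_mul, Complex.norm_exp]
        simp
      rw [hid] at h1
      refine h1.trans ?_
      calc ‖(W (k + 1) - W k) - Complex.exp (Complex.I * (t : ℂ) * ((V (k + 1) : ℝ) : ℂ))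
            * (U (k + 1) - U k)‖
          ≤ ‖W (k + 1) - W k‖ + ‖Complex.exp (Complex.I * (t : ℂ) * ((V (k + 1) : ℝ) : ℂ)) * (U (k + 1) - U k)‖ :=
            (norm_sub_le _ _)
        _ = ‖W (k + 1) - W k‖ + ‖U (k + 1) - U k‖ := by
            rw [norm_mul, habsW, one_mul]
    -- now conclude
    simp only [norm_mul, norm_div]
    simp only [Complex.norm_real, Real.norm_eq_abs, abs_of_pos hδ]
    rw [abs_div, abs_of_pos hδ, ← add_div,
      show 2 / Real.pi * t * (|V (k + 1) - V k| / δ * ‖U k‖)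
          = (2 / Real.pi * |θ| * ‖U k‖) / δ by
        rw [hθdef, abs_mul, abs_of_nonneg ht0]; field_simp]
    gcongr
    calc 2 / Real.pi * |θ| * ‖U k‖
        ≤ ‖Complex.exp ((θ : ℂ) * Complex.I) - 1‖ * ‖U k‖ := by
          apply mul_le_mul_of_nonneg_right _ (norm_nonneg _)
          exact_mod_cast hexp
      _ ≤ ‖W (k + 1) - W k‖ + ‖U (k + 1) - U k‖ := hstep
  · intro k hk
    exact mul_nonneg (mul_nonneg (by positivity) ht0) (norm_nonneg _)
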